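/- Let n ≥ 1 and let M and 𝒜 be as in the context. The set E = {u ∈ ℝⁿ : e^{u₁} + ⋯ + e^{uₙ} < 1} is a connected component of the complement ℝⁿ ∖ 𝒜 of the amoeba of the standard hyperplane: E is disjoint from 𝒜, and for every point u ∈ E the connected component of u in ℝⁿ ∖ 𝒜 equals E. (This is the distinguished component of the complement of the amoeba whose inverse image under Log is contained in the region where all coordinates have norm at most 1.) -/

import Mathlib

open scoped BigOperators

/-- The logarithm map `Log(z) = (log |z₁|, …, log |zₙ|)`. -/
noncomputable def LogMap {n : ℕ} (z : Fin n → ℂ) : Fin n → ℝ :=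
  fun i => Real.log ‖z i‖

/-- The standard hyperplane `{z ∈ (ℂ*)ⁿ : z₁ + ⋯ + zₙ = 1}`. -/
def stdHyperplane (n : ℕ) : Set (Fin n → ℂ) :=
  {z | (∀ i, z i ≠ 0) ∧ ∑ i, z i = 1}

/-- The amoeba of the standard hyperplane. -/
noncomputable def stdAmoeba (n : ℕ) : Set (Fin n → ℝ) :=
  LogMap '' stdHyperplane n

section aux

variable {n : ℕ}

private lemma E_disjoint :
    {u : Fin n → ℝ | ∑ i, Real.exp (u i) < 1} ⊆ (stdAmoeba n)ᶜ := by
  rintro u hu ⟨z, ⟨hz0, hzsum⟩, hlog⟩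
  simp only [Set.mem_setOf_eq] at hu
  have habs : ∀ i, Real.exp (u i) = ‖z i‖ := by
    intro i
    have : u i = Real.log ‖z i‖ := (congrFun hlog i).symm
    rw [this, Real.exp_log (norm_pos_iff.mpr (hz0 i))]
  have h1 : (1 : ℝ) ≤ ∑ i, Real.exp (u i) := by
    calc (1 : ℝ) = ‖∑ i, z i‖ := by rw [hzsum]; simp
    _ ≤ ∑ i, ‖z i‖ := norm_sum_le _ _
    _ = ∑ i, Real.exp (u i) := by simp [habs]
  exact absurd hu h1.not_gt

private lemma frontier_subset_amoeba :
    frontier {u : Fin n → ℝ | ∑ i, Real.exp (u i) < 1} ⊆ stdAmoeba n := by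
  have hcont : Continuous fun u : Fin n → ℝ => ∑ i, Real.exp (u i) :=
    continuous_finset_sum _ fun i _ => Real.continuous_exp.comp (continuous_apply i)
  intro u hu
  have h1 : ∑ i, Real.exp (u i) = 1 := by
    have : u ∈ (fun u : Fin n → ℝ => ∑ i, Real.exp (u i)) ⁻¹' frontier (Set.Iio (1 : ℝ)) := by
      have := hcont.frontier_preimage_subset (Set.Iio (1 : ℝ))
      exact this hu
    simpa [frontier_Iio] using this
  refine ⟨fun i => (Real.exp (u i) : ℂ), ⟨fun i => ?_, ?_⟩, ?_⟩
  · show (Real.exp (u i) : ℂ) ≠ 0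
    exact_mod_cast (Real.exp_pos (u i)).ne'
  · have : ((∑ i, Real.exp (u i) : ℝ) : ℂ) = 1 := by rw [h1]; norm_num
    simpa using this
  · funext i
    simp [LogMap, Complex.norm_real, Real.norm_eq_abs, abs_of_pos (Real.exp_pos (u i)), Real.log_exp]

private lemma E_convex :
    Convex ℝ {u : Fin n → ℝ | ∑ i, Real.exp (u i) < 1} := by
  intro x hx y hy a b ha hb hab
  simp only [Set.mem_setOf_eq] at hx hy ⊢
  have hle : ∑ i, Real.exp ((a • x + b • y) i) ≤
      a * (∑ i, Real.exp (x i)) + b * (∑ i, Real.exp (y i)) := by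
    rw [Finset.mul_sum, Finset.mul_sum, ← Finset.sum_add_distrib]
    refine Finset.sum_le_sum fun i _ => ?_
    have := convexOn_exp.2 (Set.mem_univ (x i)) (Set.mem_univ (y i)) ha hb hab
    simpa [smul_eq_mul] using this
  have hlt : a * (∑ i, Real.exp (x i)) + b * (∑ i, Real.exp (y i)) < 1 := by
    rcases eq_or_lt_of_le ha with h | h
    · have hb1 : b = 1 := by linarith
      simp [← h, hb1, hy]
    · nlinarith
  exact lt_of_le_of_lt hle hlt

end aux

/-- The set `E = {u : e^{u₁} + ⋯ + e^{uₙ} < 1}` is a connected component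
of the complement of the amoeba of the standard hyperplane: it is disjoint from the
amoeba, and it is the connected component of each of its points in the complement. -/
theorem statement9 (n : ℕ) (hn : 1 ≤ n) :
    ({u : Fin n → ℝ | ∑ i, Real.exp (u i) < 1} ∩ stdAmoeba n = ∅) ∧
    ∀ u ∈ {u : Fin n → ℝ | ∑ i, Real.exp (u i) < 1},
      connectedComponentIn ((stdAmoeba n)ᶜ) u
        = {u : Fin n → ℝ | ∑ i, Real.exp (u i) < 1} := by
  set E := {u : Fin n → ℝ | ∑ i, Real.exp (u i) < 1} with hE
  have hsub : E ⊆ (stdAmoeba n)ᶜ := E_disjoint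
  have hEopen : IsOpen E := by
    have hcont : Continuous fun u : Fin n → ℝ => ∑ i, Real.exp (u i) :=
      continuous_finset_sum _ fun i _ => Real.continuous_exp.comp (continuous_apply i)
    exact isOpen_lt hcont continuous_const
  constructor
  · ext u
    simp only [Set.mem_inter_iff, Set.mem_empty_iff_false, iff_false, not_and]
    intro hu hua
    exact hsub hu hua
  · intro u hu
    apply Set.Subset.antisymm
    · -- connectedComponentIn ⊆ E
      have hC : IsPreconnected (connectedComponentIn ((stdAmoeba n)ᶜ) u) :=
        isPreconnected_connectedComponentIn
      have hCsub : connectedComponentIn ((stdAmoeba n)ᶜ) u ⊆ (stdAmoeba n)ᶜ :=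
        connectedComponentIn_subset _ _
      have hcover : connectedComponentIn ((stdAmoeba n)ᶜ) u ⊆ E ∪ (closure E)ᶜ := by
        intro x hx
        by_cases hxE : x ∈ E
        · exact Or.inl hxE
        · refine Or.inr fun hxc => ?_
          have : x ∈ frontier E := ⟨hxc, by rwa [hEopen.interior_eq]⟩
          exact hCsub hx (frontier_subset_amoeba this)
      have hdisj : Disjoint E (closure E)ᶜ :=
        Set.disjoint_left.mpr fun x hx hxc => hxc (subset_closure hx)
      refine hC.subset_left_of_subset_union hEopen isClosed_closure.isOpen_compl hdisj hcover ?_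
      exact ⟨u, mem_connectedComponentIn (hsub hu), hu⟩
    · -- E ⊆ connectedComponentIn
      exact (E_convex.isPreconnected).subset_connectedComponentIn hu hsub
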